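/- For generic values of q, t, and t_a, every complex-valued function on the set of grid points {τq^ν : ν ∈ Λ_N} coincides with the restriction to these grid points of a unique Laurent polynomial in the space H_N^{qR} = Span{m_λ : λ ∈ Λ_N}; that is, the restriction map from H_N^{qR} to the space of all complex functions on the grid is a linear isomorphism. -/

import Mathlib

open scoped BigOperators Classical

noncomputable section

namespace QR

/-- q-shifted factorial `(a;q)_m`. -/
def qPoch (q a : ℂ) (m : ℕ) : ℂ := ∏ i ∈ Finset.range m, (1 - a * q ^ i)

/-- dominance: weakly decreasing vector of nonnegative integers. -/
def isDominant {n : ℕ} (ν : Fin n → ℕ) : Prop := ∀ i j : Fin n, i ≤ j → ν j ≤ ν i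

/-- the alcove `Λ_N` of dominant weights with entries at most `N`. -/
def alcove (n N : ℕ) : Finset (Fin n → ℕ) :=
  ((Finset.univ : Finset (Fin n → Fin (N + 1))).image fun ν i => (ν i : ℕ)).filter
    fun ν => isDominant ν

/-- dominance partial order on weights. -/
def domLE {n : ℕ} (μ lam : Fin n → ℕ) : Prop :=
  ∀ k : Fin n, ∑ j ∈ Finset.univ.filter (· ≤ k), μ j ≤ ∑ j ∈ Finset.univ.filter (· ≤ k), lam j

/-- the orbit of a dominant weight under permutations and sign flips. -/
def signedOrbit {n : ℕ} (lam : Fin n → ℕ) : Finset (Fin n → ℤ) :=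
  Finset.image
    (fun pe : Equiv.Perm (Fin n) × (Fin n → Bool) =>
      fun i => if pe.2 i then (lam (pe.1 i) : ℤ) else -(lam (pe.1 i) : ℤ))
    Finset.univ

/-- symmetrized monomial `m_λ`. -/
def mono {n : ℕ} (lam : Fin n → ℕ) (z : Fin n → ℂ) : ℂ :=
  ∑ μ ∈ signedOrbit lam, ∏ i, z i ^ μ i

/-- numerator of the coefficient `V_{ε j}` of Koornwinder's operator. -/
def VNum {n : ℕ} (t : ℂ) (T : Fin 4 → ℂ) (ε : ℤ) (j : Fin n) (z : Fin n → ℂ) : ℂ :=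
  (∏ r, (1 - T r * z j ^ ε)) *
    ∏ k ∈ Finset.univ.erase j, ((1 - t * z j ^ ε * z k) * (1 - t * z j ^ ε * (z k)⁻¹))

/-- denominator of the coefficient `V_{ε j}` of Koornwinder's operator. -/
def VDen {n : ℕ} (q : ℂ) (ε : ℤ) (j : Fin n) (z : Fin n → ℂ) : ℂ :=
  ((1 - z j ^ (2 * ε)) * (1 - q * z j ^ (2 * ε))) *
    ∏ k ∈ Finset.univ.erase j, ((1 - z j ^ ε * z k) * (1 - z j ^ ε * (z k)⁻¹))

/-- coefficient `V_{ε j}` of Koornwinder's operator. -/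
def Vcoef {n : ℕ} (q t : ℂ) (T : Fin 4 → ℂ) (ε : ℤ) (j : Fin n) (z : Fin n → ℂ) : ℂ :=
  VNum t T ε j z / VDen q ε j z

/-- Koornwinder's second order q-difference operator `D`. -/
def Dop {n : ℕ} (q t : ℂ) (T : Fin 4 → ℂ) (f : (Fin n → ℂ) → ℂ) (z : Fin n → ℂ) : ℂ :=
  ∑ j, (Vcoef q t T 1 j z * (f (Function.update z j (q * z j)) - f z)
      + Vcoef q t T (-1) j z * (f (Function.update z j (q⁻¹ * z j)) - f z))

/-- eigenvalue `E_{λ,λ}`. -/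
def Eval {n : ℕ} (q t : ℂ) (T : Fin 4 → ℂ) (lam : Fin n → ℕ) : ℂ :=
  ∑ i : Fin n,
    (q⁻¹ * (∏ r, T r) * t ^ (2 * n - (i : ℕ) - 2) * (q ^ lam i - 1)
      + t ^ (i : ℕ) * (q ^ (-(lam i : ℤ)) - 1))

/-- `p` is the monic multivariable Askey-Wilson polynomial attached to `lam`. -/
def IsAW {n : ℕ} (q t : ℂ) (T : Fin 4 → ℂ) (lam : Fin n → ℕ) (p : (Fin n → ℂ) → ℂ) : Prop :=
  (∃ c : (Fin n → ℕ) →₀ ℂ,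
    (∀ μ ∈ c.support, isDominant μ ∧ domLE μ lam ∧ μ ≠ lam) ∧
    ∀ z : Fin n → ℂ, (∀ i, z i ≠ 0) →
      p z = mono lam z + c.sum fun μ coef => coef * mono μ z) ∧
  ∀ z : Fin n → ℂ, (∀ i, z i ≠ 0) →
    (∀ j : Fin n, VDen q 1 j z ≠ 0 ∧ VDen q (-1) j z ≠ 0) →
    Dop q t T p z = Eval q t T lam * p z

/-- `τ_j = t^(n-j) t_a`. -/
def tauv (n : ℕ) (t ta : ℂ) (i : Fin n) : ℂ := t ^ (n - 1 - (i : ℕ)) * ta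

/-- the grid point `τ q^ν`. -/
def gridZ (n : ℕ) (q t ta : ℂ) (ν : Fin n → ℕ) : Fin n → ℂ := fun i => tauv n t ta i * q ^ ν i

/-- pairs `1 ≤ j < k ≤ n`. -/
def pairsF (n : ℕ) : Finset (Fin n × Fin n) := Finset.univ.filter fun p => p.1 < p.2

/-- the factor `c₀(ν)`, with `s` a chosen square root of `t₀t₁t₂t₃ q⁻¹`. -/
def c0fac {n : ℕ} (t s : ℂ) (ν : Fin n → ℕ) : ℂ := ∏ i : Fin n, (t ^ (n - 1 - (i : ℕ)) * s) ^ ν i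

/-- the square `c₀(ν)²` (a rational expression in the parameters). -/
def c0sq {n : ℕ} (q t : ℂ) (T : Fin 4 → ℂ) (ν : Fin n → ℕ) : ℂ :=
  ∏ i : Fin n, ((t ^ (n - 1 - (i : ℕ))) ^ 2 * (∏ r, T r) * q⁻¹) ^ ν i

/-- numerator of `C₊^{qR}(ν)` apart from the factor `c₀(ν)`. -/
def CpN (n : ℕ) (q t ta : ℂ) (ν : Fin n → ℕ) : ℂ :=
  (∏ p ∈ pairsF n,
      qPoch q (tauv n t ta p.1 * tauv n t ta p.2) (ν p.1 + ν p.2) *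
        qPoch q (tauv n t ta p.1 * (tauv n t ta p.2)⁻¹) (ν p.1 - ν p.2)) *
    ∏ i, qPoch q (tauv n t ta i ^ 2) (2 * ν i)

/-- denominator of `C₊^{qR}(ν)`. -/
def CpD (n : ℕ) (q t ta : ℂ) (T : Fin 4 → ℂ) (ν : Fin n → ℕ) : ℂ :=
  (∏ p ∈ pairsF n,
      qPoch q (t * tauv n t ta p.1 * tauv n t ta p.2) (ν p.1 + ν p.2) *
        qPoch q (t * tauv n t ta p.1 * (tauv n t ta p.2)⁻¹) (ν p.1 - ν p.2)) *
    ∏ i, ∏ r, qPoch q (T r * tauv n t ta i) (ν i)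

/-- numerator of `C₋^{qR}(ν)` apart from the factor `c₀(ν)`. -/
def CmN (n : ℕ) (q t ta : ℂ) (T : Fin 4 → ℂ) (ν : Fin n → ℕ) : ℂ :=
  (∏ p ∈ pairsF n,
      qPoch q (t⁻¹ * q * tauv n t ta p.1 * tauv n t ta p.2) (ν p.1 + ν p.2) *
        qPoch q (t⁻¹ * q * tauv n t ta p.1 * (tauv n t ta p.2)⁻¹) (ν p.1 - ν p.2)) *
    ∏ i, ∏ r, qPoch q ((T r)⁻¹ * q * tauv n t ta i) (ν i)

/-- denominator of `C₋^{qR}(ν)`. -/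
def CmD (n : ℕ) (q t ta : ℂ) (ν : Fin n → ℕ) : ℂ :=
  (∏ p ∈ pairsF n,
      qPoch q (q * tauv n t ta p.1 * tauv n t ta p.2) (ν p.1 + ν p.2) *
        qPoch q (q * tauv n t ta p.1 * (tauv n t ta p.2)⁻¹) (ν p.1 - ν p.2)) *
    ∏ i, qPoch q (q * tauv n t ta i ^ 2) (2 * ν i)

/-- `C₊^{qR}(ν)` (depends on the chosen square root `s`). -/
def Cplus (n : ℕ) (q t ta s : ℂ) (T : Fin 4 → ℂ) (ν : Fin n → ℕ) : ℂ :=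
  c0fac t s ν * CpN n q t ta ν / CpD n q t ta T ν

/-- `C₋^{qR}(ν)` (depends on the chosen square root `s`). -/
def Cminus (n : ℕ) (q t ta s : ℂ) (T : Fin 4 → ℂ) (ν : Fin n → ℕ) : ℂ :=
  c0fac t s ν * CmN n q t ta T ν / CmD n q t ta ν

/-- the discrete weight `Δ^{qR}(ν) = 1/(C₊^{qR}(ν) C₋^{qR}(ν))`, a rational expression. -/
def weightQR (n : ℕ) (q t ta : ℂ) (T : Fin 4 → ℂ) (ν : Fin n → ℕ) : ℂ :=
  (CpD n q t ta T ν * CmD n q t ta ν) / (c0sq q t T ν * CpN n q t ta ν * CmN n q t ta T ν)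

/-- the discrete bilinear form `⟨f,g⟩_N^{qR}`. -/
def braket (n N : ℕ) (q t ta : ℂ) (T : Fin 4 → ℂ) (f g : (Fin n → ℂ) → ℂ) : ℂ :=
  ∑ ν ∈ alcove n N, f (gridZ n q t ta ν) * g (gridZ n q t ta ν) * weightQR n q t ta T ν

/-! ### Auxiliary material for Statement 5 -/

section Statement5Aux

open Finset

variable {n N : ℕ}

lemma alcove_dominant {μ : Fin n → ℕ} (h : μ ∈ alcove n N) : isDominant μ :=
  (Finset.mem_filter.1 h).2

lemma alcove_le {μ : Fin n → ℕ} (h : μ ∈ alcove n N) (i : Fin n) : μ i ≤ N := by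
  obtain ⟨f, -, rfl⟩ := Finset.mem_image.1 (Finset.mem_filter.1 h).1
  exact Nat.lt_succ_iff.1 (f i).2

lemma signedOrbit_spec {μ : Fin n → ℕ} {v : Fin n → ℤ} (hv : v ∈ signedOrbit μ) :
    ∃ σ : Equiv.Perm (Fin n), ∃ ε : Fin n → Bool,
      v = fun i => if ε i then (μ (σ i) : ℤ) else -(μ (σ i) : ℤ) := by
  obtain ⟨⟨σ, ε⟩, -, rfl⟩ := Finset.mem_image.1 hv
  exact ⟨σ, ε, rfl⟩

lemma self_mem_signedOrbit (μ : Fin n → ℕ) : (fun i => (μ i : ℤ)) ∈ signedOrbit μ :=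
  Finset.mem_image.2 ⟨⟨1, fun _ => true⟩, Finset.mem_univ _, by funext i; simp⟩

lemma signedOrbit_bound {μ : Fin n → ℕ} (hμ : ∀ i, μ i ≤ N) {v : Fin n → ℤ}
    (hv : v ∈ signedOrbit μ) (i : Fin n) : -(N : ℤ) ≤ v i ∧ v i ≤ N := by
  obtain ⟨σ, ε, rfl⟩ := signedOrbit_spec hv
  have h1 : (μ (σ i) : ℤ) ≤ N := by exact_mod_cast hμ (σ i)
  have h0 : (0 : ℤ) ≤ (μ (σ i) : ℤ) := Int.natCast_nonneg _
  refine ⟨?_, ?_⟩ <;> cases h : ε i <;> simp only [h, if_true, if_false, Bool.false_eq_true] <;>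
    linarith

/-- rearrangement: strict inequality for non-dominant elements of the signed orbit. -/
lemma sum_orbit_lt {w : Fin n → ℤ} (hpos : ∀ i, 0 < w i)
    (hanti : ∀ i j : Fin n, i < j → w j < w i)
    {μ : Fin n → ℕ} (hdom : isDominant μ) {v : Fin n → ℤ} (hv : v ∈ signedOrbit μ)
    (hne : v ≠ fun i => (μ i : ℤ)) :
    ∑ i, w i * v i < ∑ i, w i * (μ i : ℤ) := by
  obtain ⟨σ, ε, rfl⟩ := signedOrbit_spec hv
  set g : Fin n → ℤ := fun i => (μ i : ℤ) with hg
  have hganti : Antitone g := fun i j hij => by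
    simpa [hg] using (Nat.cast_le (α := ℤ)).2 (hdom i j hij)
  have hmono : Monovary w g := by
    intro i j hij
    have hji : j < i := by
      by_contra h
      exact absurd (hganti (not_lt.1 h)) (not_le.2 hij)
    exact (hanti j i hji).le
  have hle : ∀ i, (if ε i then g (σ i) else -g (σ i)) ≤ g (σ i) := by
    intro i
    cases h : ε i
    · simp only [h, Bool.false_eq_true, if_false]
      exact neg_le_self (Int.natCast_nonneg _)
    · simp [h]
  have step2 : ∑ i, w i * g (σ i) ≤ ∑ i, w i * g i := by
    simpa only [smul_eq_mul] using hmono.sum_smul_comp_perm_le_sum_smul (σ := σ)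
  by_cases hall : ∀ i, (if ε i then g (σ i) else -g (σ i)) = g (σ i)
  · simp only [hall]
    have hnotmono : ¬ Monovary w (g ∘ σ) := by
      intro hM
      have hgs : Antitone (g ∘ σ) := by
        intro i j hij
        rcases eq_or_lt_of_le hij with rfl | hij'
        · exact le_rfl
        · by_contra h
          exact absurd (hM (not_le.1 h)) (not_le.2 (hanti i j hij'))
      have huniq : (OrderDual.toDual ∘ g) ∘ σ = (OrderDual.toDual ∘ g) ∘ (1 : Equiv.Perm (Fin n)) := by
        refine Tuple.unique_monotone ?_ ?_
        · intro i j hij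
          exact OrderDual.toDual_le_toDual.2 (hgs hij)
        · intro i j hij
          exact OrderDual.toDual_le_toDual.2 (hganti hij)
      have hgeq : (fun i => g (σ i)) = g := by
        funext i
        exact OrderDual.toDual.injective (congrFun huniq i)
      exact hne (by funext i; rw [hall i]; exact congrFun hgeq i)
    have := (hmono.sum_smul_comp_perm_lt_sum_smul_iff (σ := σ)).2 hnotmono
    have hall' : ∀ i, (if ε i = true then (μ (σ i) : ℤ) else -(μ (σ i) : ℤ)) = μ (σ i) := hall
    simpa only [smul_eq_mul, hall'] using this
  · push_neg at hall
    obtain ⟨i₀, hi₀⟩ := hall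
    have step1 : ∑ i, w i * (if ε i then g (σ i) else -g (σ i)) < ∑ i, w i * g (σ i) := by
      refine Finset.sum_lt_sum (fun i _ => mul_le_mul_of_nonneg_left (hle i) (hpos i).le)
        ⟨i₀, Finset.mem_univ _, ?_⟩
      exact mul_lt_mul_of_pos_left (lt_of_le_of_ne (hle i₀) hi₀) (hpos i₀)
    exact lt_of_lt_of_le step1 step2

/-- the exponent of a single orbit term after specializing all variables to one. -/
def wexp (n N : ℕ) (ν : Fin n → ℕ) (v : Fin n → ℤ) : ℕ :=
  ∑ i, (ν i + (n - 1 - (i : ℕ)) + 1) * ((N : ℤ) + v i).toNat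

/-- the maximal exponent. -/
def dd (n N : ℕ) (ν μ : Fin n → ℕ) : ℕ :=
  ∑ i, (ν i + (n - 1 - (i : ℕ)) + 1) * (N + μ i)

lemma wexp_self (ν μ : Fin n → ℕ) : wexp n N ν (fun i => (μ i : ℤ)) = dd n N ν μ := by
  refine Finset.sum_congr rfl fun i _ => ?_
  have h : ((N : ℤ) + ((μ i : ℕ) : ℤ)).toNat = N + μ i := by omega
  rw [h]

lemma wexp_lt {ν μ : Fin n → ℕ} (hν : isDominant ν) (hμdom : isDominant μ)
    (hμN : ∀ i, μ i ≤ N) {v : Fin n → ℤ} (hv : v ∈ signedOrbit μ)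
    (hne : v ≠ fun i => (μ i : ℤ)) : wexp n N ν v < dd n N ν μ := by
  set W : Fin n → ℤ := fun i => ((ν i + (n - 1 - (i : ℕ)) + 1 : ℕ) : ℤ) with hW
  have hpos : ∀ i, 0 < W i := fun i => Int.natCast_pos.mpr (Nat.succ_pos _)
  have hanti : ∀ i j : Fin n, i < j → W j < W i := by
    intro i j hij
    have h1 : ν j ≤ ν i := hν i j hij.le
    have hj : (j : ℕ) ≤ n - 1 := Nat.le_sub_one_of_lt j.2
    have hij' : (i : ℕ) < (j : ℕ) := hij
    have h2 : n - 1 - (j : ℕ) < n - 1 - (i : ℕ) :=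
      Nat.sub_lt_sub_left (lt_of_lt_of_le hij' hj) hij'
    simp only [hW]
    exact_mod_cast (by omega : ν j + (n - 1 - (j : ℕ)) + 1 < ν i + (n - 1 - (i : ℕ)) + 1)
  have key := sum_orbit_lt hpos hanti hμdom hv hne
  have hlow : ∀ i, -(N : ℤ) ≤ v i := fun i => (signedOrbit_bound hμN hv i).1
  have hc1 : (wexp n N ν v : ℤ) = ∑ i, W i * ((N : ℤ) + v i) := by
    rw [wexp, Nat.cast_sum]
    refine Finset.sum_congr rfl fun i _ => ?_
    rw [Nat.cast_mul, Int.toNat_of_nonneg (by linarith [hlow i])]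
  have hc2 : (dd n N ν μ : ℤ) = ∑ i, W i * ((N : ℤ) + (μ i : ℤ)) := by
    rw [dd, Nat.cast_sum]
    refine Finset.sum_congr rfl fun i _ => ?_
    simp only [hW]
    push_cast
    ring
  have : (wexp n N ν v : ℤ) < (dd n N ν μ : ℤ) := by
    rw [hc1, hc2]
    have e1 : ∑ i, W i * ((N : ℤ) + v i) = (∑ i, W i * (N : ℤ)) + ∑ i, W i * v i := by
      rw [← Finset.sum_add_distrib]
      exact Finset.sum_congr rfl fun i _ => by ring
    have e2 : ∑ i, W i * ((N : ℤ) + (μ i : ℤ)) = (∑ i, W i * (N : ℤ)) + ∑ i, W i * (μ i : ℤ) := by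
      rw [← Finset.sum_add_distrib]
      exact Finset.sum_congr rfl fun i _ => by ring
    rw [e1, e2]
    exact (add_lt_add_iff_left _).2 key
  exact_mod_cast this

lemma wexp_le {ν μ : Fin n → ℕ} (hν : isDominant ν) (hμdom : isDominant μ)
    (hμN : ∀ i, μ i ≤ N) {v : Fin n → ℤ} (hv : v ∈ signedOrbit μ) :
    wexp n N ν v ≤ dd n N ν μ := by
  by_cases h : v = fun i => (μ i : ℤ)
  · subst h; exact (wexp_self ν μ).le
  · exact (wexp_lt hν hμdom hμN hv h).le
/-- polynomial matrix entry: a Laurent-free version of `mono μ (gridZ ν)` scaled by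
`∏ i (τ_i q^{ν_i})^N`, as a polynomial in the three parameters `q = X 0, t = X 1, ta = X 2`. -/
def Pent (n N : ℕ) (ν μ : Fin n → ℕ) : MvPolynomial (Fin 3) ℂ :=
  ∑ v ∈ signedOrbit μ, ∏ i : Fin n,
    (MvPolynomial.X 1 ^ (n - 1 - (i : ℕ)) * MvPolynomial.X 2 *
      MvPolynomial.X 0 ^ ν i) ^ ((N : ℤ) + v i).toNat

/-- the generic polynomial: determinant of the matrix of `Pent`s over the alcove. -/
def Ppoly (n N : ℕ) : MvPolynomial (Fin 3) ℂ :=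
  Matrix.det (Matrix.of fun ν μ : {x // x ∈ alcove n N} => Pent n N ν.1 μ.1)

/-- specialization of `Pent` with all three variables set to a single variable `X`. -/
def Qent (n N : ℕ) (ν μ : Fin n → ℕ) : Polynomial ℂ :=
  ∑ v ∈ signedOrbit μ, Polynomial.X ^ wexp n N ν v

lemma Qent_natDegree_le {ν μ : Fin n → ℕ} (hν : isDominant ν) (hμdom : isDominant μ)
    (hμN : ∀ i, μ i ≤ N) : (Qent n N ν μ).natDegree ≤ dd n N ν μ :=
  Polynomial.natDegree_sum_le_of_forall_le _ _ fun v hv => by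
    rw [Polynomial.natDegree_X_pow]
    exact wexp_le hν hμdom hμN hv

lemma Qent_coeff {ν μ : Fin n → ℕ} (hν : isDominant ν) (hμdom : isDominant μ)
    (hμN : ∀ i, μ i ≤ N) : (Qent n N ν μ).coeff (dd n N ν μ) = 1 := by
  rw [Qent, Polynomial.finset_sum_coeff]
  rw [Finset.sum_eq_single_of_mem (fun i => (μ i : ℤ)) (self_mem_signedOrbit μ)]
  · rw [wexp_self, Polynomial.coeff_X_pow_self]
  · intro v hv hvne
    rw [Polynomial.coeff_X_pow, if_neg (Ne.symm (Nat.ne_of_lt (wexp_lt hν hμdom hμN hv hvne)))]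

lemma Qent_monic {ν μ : Fin n → ℕ} (hν : isDominant ν) (hμdom : isDominant μ)
    (hμN : ∀ i, μ i ≤ N) : (Qent n N ν μ).Monic :=
  Polynomial.monic_of_natDegree_le_of_coeff_eq_one _ (Qent_natDegree_le hν hμdom hμN)
    (Qent_coeff hν hμdom hμN)

lemma Qent_natDegree_eq {ν μ : Fin n → ℕ} (hν : isDominant ν) (hμdom : isDominant μ)
    (hμN : ∀ i, μ i ≤ N) : (Qent n N ν μ).natDegree = dd n N ν μ :=
  le_antisymm (Qent_natDegree_le hν hμdom hμN)
    (Polynomial.le_natDegree_of_ne_zero (by rw [Qent_coeff hν hμdom hμN]; exact one_ne_zero))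

lemma two_dot_le (a b : Fin n → ℕ) :
    2 * ∑ i, a i * b i ≤ (∑ i, a i * a i) + ∑ i, b i * b i := by
  zify
  rw [Finset.mul_sum, ← Finset.sum_add_distrib]
  refine Finset.sum_le_sum fun i _ => ?_
  nlinarith [sq_nonneg ((a i : ℤ) - b i)]

lemma two_dot_lt (a b : Fin n → ℕ) (hab : a ≠ b) :
    2 * ∑ i, a i * b i < (∑ i, a i * a i) + ∑ i, b i * b i := by
  obtain ⟨i₀, hi₀⟩ := Function.ne_iff.1 hab
  zify
  rw [Finset.mul_sum, ← Finset.sum_add_distrib]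
  refine Finset.sum_lt_sum (fun i _ => by nlinarith [sq_nonneg ((a i : ℤ) - b i)])
    ⟨i₀, Finset.mem_univ _, ?_⟩
  have h0 : ((a i₀ : ℤ) - b i₀) ≠ 0 := sub_ne_zero.2 (by exact_mod_cast hi₀)
  nlinarith [mul_self_pos.mpr h0]

lemma sum_dot_perm_lt {ι : Type*} [Fintype ι] (f : ι → Fin n → ℕ)
    (hf : Function.Injective f) (π : Equiv.Perm ι) (hπ : π ≠ 1) :
    ∑ x, ∑ i, f (π x) i * f x i < ∑ x, ∑ i, f x i * f x i := by
  obtain ⟨x₀, hx₀⟩ : ∃ x, π x ≠ x := by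
    by_contra h
    push_neg at h
    exact hπ (Equiv.ext h)
  have h2 : 2 * ∑ x, ∑ i, f (π x) i * f x i < 2 * ∑ x, ∑ i, f x i * f x i := by
    calc 2 * ∑ x, ∑ i, f (π x) i * f x i = ∑ x, 2 * ∑ i, f (π x) i * f x i := by
          rw [Finset.mul_sum]
      _ < ∑ x, ((∑ i, f (π x) i * f (π x) i) + ∑ i, f x i * f x i) :=
          Finset.sum_lt_sum (fun x _ => two_dot_le _ _)
            ⟨x₀, Finset.mem_univ _, two_dot_lt _ _ (fun h => hx₀ (hf h))⟩
      _ = (∑ x, ∑ i, f (π x) i * f (π x) i) + ∑ x, ∑ i, f x i * f x i :=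
          Finset.sum_add_distrib
      _ = 2 * ∑ x, ∑ i, f x i * f x i := by
          rw [Equiv.sum_comp π (fun x => ∑ i, f x i * f x i), two_mul]
  omega

lemma dd_expand (ν μ : Fin n → ℕ) : dd n N ν μ =
    ((∑ i, ν i * N) + (∑ i, ν i * μ i)) +
      ((∑ i : Fin n, (n - 1 - (i : ℕ) + 1) * N) + ∑ i : Fin n, (n - 1 - (i : ℕ) + 1) * μ i) := by
  rw [dd, ← Finset.sum_add_distrib, ← Finset.sum_add_distrib, ← Finset.sum_add_distrib]
  exact Finset.sum_congr rfl fun i _ => by ring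

lemma dd_perm_lt (π : Equiv.Perm {x // x ∈ alcove n N}) (hπ : π ≠ 1) :
    ∑ ν : {x // x ∈ alcove n N}, dd n N (π ν).1 ν.1 <
      ∑ ν : {x // x ∈ alcove n N}, dd n N ν.1 ν.1 := by
  simp only [dd_expand]
  rw [Finset.sum_add_distrib, Finset.sum_add_distrib, Finset.sum_add_distrib,
    Finset.sum_add_distrib, Finset.sum_add_distrib, Finset.sum_add_distrib]
  have hA : ∑ ν : {x // x ∈ alcove n N}, ∑ i, (π ν).1 i * N
      = ∑ ν : {x // x ∈ alcove n N}, ∑ i, ν.1 i * N :=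
    Equiv.sum_comp π (fun ν => ∑ i, ν.1 i * N)
  have hB : ∑ ν : {x // x ∈ alcove n N}, ∑ i, (π ν).1 i * ν.1 i
      < ∑ ν : {x // x ∈ alcove n N}, ∑ i, ν.1 i * ν.1 i :=
    sum_dot_perm_lt (fun ν : {x // x ∈ alcove n N} => ν.1) Subtype.val_injective π hπ
  omega

lemma Ppoly_ne_zero (n N : ℕ) : Ppoly n N ≠ 0 := by
  set φ : MvPolynomial (Fin 3) ℂ →+* Polynomial ℂ :=
    (MvPolynomial.aeval fun _ : Fin 3 => (Polynomial.X : Polynomial ℂ)).toRingHom with hφ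
  intro h0
  have hmap : φ (Ppoly n N)
      = Matrix.det (Matrix.of fun ν μ : {x // x ∈ alcove n N} => Qent n N ν.1 μ.1) := by
    rw [Ppoly, RingHom.map_det]
    refine congrArg Matrix.det (Matrix.ext fun ν μ => ?_)
    simp only [RingHom.mapMatrix_apply, Matrix.map_apply, Matrix.of_apply]
    show φ (Pent n N ν.1 μ.1) = Qent n N ν.1 μ.1
    rw [Pent, Qent, map_sum]
    refine Finset.sum_congr rfl fun v hv => ?_
    rw [map_prod]
    have hterm : ∀ i : Fin n,
        φ ((MvPolynomial.X 1 ^ (n - 1 - (i : ℕ)) * MvPolynomial.X 2 *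
          MvPolynomial.X 0 ^ ν.1 i) ^ ((N : ℤ) + v i).toNat)
        = Polynomial.X ^ ((ν.1 i + (n - 1 - (i : ℕ)) + 1) * ((N : ℤ) + v i).toNat) := by
      intro i
      rw [map_pow, map_mul, map_mul, map_pow, map_pow]
      simp only [hφ, AlgHom.toRingHom_eq_coe, RingHom.coe_coe, MvPolynomial.aeval_X]
      rw [← pow_succ, ← pow_add, ← pow_mul]
      congr 1
      ring
    rw [Finset.prod_congr rfl (fun i _ => hterm i), Finset.prod_pow_eq_pow_sum, wexp]
  have hc1 : (Matrix.det
      (Matrix.of fun ν μ : {x // x ∈ alcove n N} => Qent n N ν.1 μ.1)).coeff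
      (∑ ν : {x // x ∈ alcove n N}, dd n N ν.1 ν.1) = 1 := by
    rw [Matrix.det_apply, Polynomial.finset_sum_coeff]
    rw [Finset.sum_eq_single_of_mem (1 : Equiv.Perm {x // x ∈ alcove n N})
      (Finset.mem_univ _)]
    · simp only [Equiv.Perm.sign_one, one_smul, Equiv.Perm.one_apply, Matrix.of_apply]
      have hmonic : (∏ ν : {x // x ∈ alcove n N}, Qent n N ν.1 ν.1).Monic :=
        Polynomial.monic_prod_of_monic _ _ fun ν _ =>
          Qent_monic (alcove_dominant ν.2) (alcove_dominant ν.2) (alcove_le ν.2)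
      have hdeg : (∏ ν : {x // x ∈ alcove n N}, Qent n N ν.1 ν.1).natDegree
          = ∑ ν : {x // x ∈ alcove n N}, dd n N ν.1 ν.1 := by
        rw [Polynomial.natDegree_prod _ _ fun ν _ =>
          (Qent_monic (alcove_dominant ν.2) (alcove_dominant ν.2) (alcove_le ν.2)).ne_zero]
        exact Finset.sum_congr rfl fun ν _ =>
          Qent_natDegree_eq (alcove_dominant ν.2) (alcove_dominant ν.2) (alcove_le ν.2)
      rw [← hdeg]
      exact hmonic.coeff_natDegree
    · intro σ _ hσ
      have hlt : (∏ ν : {x // x ∈ alcove n N}, Qent n N (σ ν).1 ν.1).natDegree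
          < ∑ ν : {x // x ∈ alcove n N}, dd n N ν.1 ν.1 := by
        refine lt_of_le_of_lt (le_trans (Polynomial.natDegree_prod_le _ _)
          (Finset.sum_le_sum fun ν _ => Qent_natDegree_le (alcove_dominant (σ ν).2)
            (alcove_dominant ν.2) (alcove_le ν.2))) (dd_perm_lt σ hσ)
      simp only [Matrix.of_apply]
      rw [Polynomial.coeff_smul, Polynomial.coeff_eq_zero_of_natDegree_lt hlt, smul_zero]
  rw [h0, map_zero] at hmap
  rw [← hmap, Polynomial.coeff_zero] at hc1
  exact zero_ne_one hc1
lemma gridZ_ne_zero {q t ta : ℂ} (hq : q ≠ 0) (ht : t ≠ 0) (hta : ta ≠ 0)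
    (ν : Fin n → ℕ) (i : Fin n) : gridZ n q t ta ν i ≠ 0 :=
  mul_ne_zero (mul_ne_zero (pow_ne_zero _ ht) hta) (pow_ne_zero _ hq)

lemma eval_Pent {q t ta : ℂ} (hq : q ≠ 0) (ht : t ≠ 0) (hta : ta ≠ 0)
    (ν μ : Fin n → ℕ) (hμ : ∀ i, μ i ≤ N) :
    MvPolynomial.eval ![q, t, ta] (Pent n N ν μ)
      = (∏ i, gridZ n q t ta ν i ^ N) * mono μ (gridZ n q t ta ν) := by
  rw [Pent, map_sum, mono, Finset.mul_sum]
  refine Finset.sum_congr rfl fun v hv => ?_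
  rw [map_prod, ← Finset.prod_mul_distrib]
  refine Finset.prod_congr rfl fun i _ => ?_
  rw [map_pow, map_mul, map_mul, map_pow, map_pow, MvPolynomial.eval_X,
    MvPolynomial.eval_X, MvPolynomial.eval_X]
  simp only [Matrix.cons_val_zero, Matrix.cons_val_one, Matrix.head_cons,
    Matrix.cons_val_two, Matrix.tail_cons]
  have hz := gridZ_ne_zero hq ht hta ν i
  have hnn : (0 : ℤ) ≤ (N : ℤ) + v i := by linarith [(signedOrbit_bound hμ hv i).1]
  have hgz : t ^ (n - 1 - (i : ℕ)) * ta * q ^ ν i = gridZ n q t ta ν i := rfl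
  rw [hgz, ← zpow_natCast (gridZ n q t ta ν i) ((N : ℤ) + v i).toNat,
    Int.toNat_of_nonneg hnn, zpow_add₀ hz, zpow_natCast]

end Statement5Aux

/-- For generic `q, t, t_a` (i.e. off the zero set of some nonzero polynomial
in these three parameters), every complex-valued function on the grid `{τ q^ν : ν ∈ Λ_N}`
coincides on the grid with a unique element of `H_N^{qR} = Span{m_λ : λ ∈ Λ_N}`: the
restriction map from `H_N^{qR}` to functions on the grid is a linear isomorphism. -/
theorem statement5 (n N : ℕ) (hn : 1 ≤ n) :
    ∃ P : MvPolynomial (Fin 3) ℂ, P ≠ 0 ∧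
      ∀ q t ta : ℂ, q ≠ 0 → t ≠ 0 → ta ≠ 0 →
        MvPolynomial.eval ![q, t, ta] P ≠ 0 →
        ∀ F : (Fin n → ℕ) → ℂ,
          ∃! c : (Fin n → ℕ) → ℂ,
            (∀ mu, mu ∉ alcove n N → c mu = 0) ∧
            ∀ ν ∈ alcove n N,
              (∑ mu ∈ alcove n N, c mu * mono mu (gridZ n q t ta ν)) = F ν := by
  classical
  refine ⟨Ppoly n N, Ppoly_ne_zero n N, ?_⟩
  intro q t ta hq ht hta hP F
  set M : Matrix {x // x ∈ alcove n N} {x // x ∈ alcove n N} ℂ :=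
    Matrix.of (fun ν μ => mono μ.1 (gridZ n q t ta ν.1)) with hM
  have heval : MvPolynomial.eval ![q, t, ta] (Ppoly n N)
      = (∏ ν : {x // x ∈ alcove n N}, ∏ i, gridZ n q t ta ν.1 i ^ N) * M.det := by
    rw [Ppoly, RingHom.map_det]
    have hmm : (MvPolynomial.eval ![q, t, ta]).mapMatrix
        (Matrix.of fun ν μ : {x // x ∈ alcove n N} => Pent n N ν.1 μ.1)
        = Matrix.of (fun ν μ : {x // x ∈ alcove n N} =>
            (∏ i, gridZ n q t ta ν.1 i ^ N) * M ν μ) := by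
      refine Matrix.ext fun ν μ => ?_
      simp only [RingHom.mapMatrix_apply, Matrix.map_apply, Matrix.of_apply, hM]
      exact eval_Pent hq ht hta ν.1 μ.1 (alcove_le μ.2)
    rw [hmm, Matrix.det_mul_column]
  have hdet : IsUnit M.det := by
    rw [isUnit_iff_ne_zero]
    intro h
    rw [h, mul_zero] at heval
    exact hP heval
  set Fv : {x // x ∈ alcove n N} → ℂ := fun ν => F ν.1 with hFv
  set cv : {x // x ∈ alcove n N} → ℂ := M⁻¹.mulVec Fv with hcv
  have hMcv : M.mulVec cv = Fv := by
    rw [hcv, Matrix.mulVec_mulVec, Matrix.mul_nonsing_inv _ hdet, Matrix.one_mulVec]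
  have hsum : ∀ (c : (Fin n → ℕ) → ℂ) (ν : {x // x ∈ alcove n N}),
      ∑ mu ∈ alcove n N, c mu * mono mu (gridZ n q t ta ν.1)
        = M.mulVec (fun μ => c μ.1) ν := by
    intro c ν
    rw [← Finset.sum_attach (alcove n N) (fun mu => c mu * mono mu (gridZ n q t ta ν.1))]
    simp only [Matrix.mulVec, dotProduct, Finset.univ_eq_attach, hM, Matrix.of_apply]
    exact Finset.sum_congr rfl fun μ _ => mul_comm _ _
  refine ⟨fun mu => if h : mu ∈ alcove n N then cv ⟨mu, h⟩ else 0, ⟨?_, ?_⟩, ?_⟩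
  · intro mu hmu
    simp [hmu]
  · intro ν hν
    rw [hsum _ ⟨ν, hν⟩]
    have hfun : (fun μ : {x // x ∈ alcove n N} =>
        if h : μ.1 ∈ alcove n N then cv ⟨μ.1, h⟩ else 0) = cv := by
      funext μ
      simp [μ.2]
    rw [hfun, hMcv]
  · rintro c' ⟨hc'0, hc'⟩
    have hw : M.mulVec (fun μ => c' μ.1) = Fv := by
      funext ν
      rw [← hsum c' ν, hc' ν.1 ν.2]
    have hw2 : (fun μ : {x // x ∈ alcove n N} => c' μ.1) = cv := by
      have h1 := congrArg (fun v => M⁻¹.mulVec v) hw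
      simpa only [Matrix.mulVec_mulVec, Matrix.nonsing_inv_mul _ hdet,
        Matrix.one_mulVec, hcv] using h1
    funext mu
    by_cases h : mu ∈ alcove n N
    · simp only [h, dif_pos]
      rw [← hw2]
    · simp [h, hc'0 mu h]

end QR
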